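/- Let G and H be loopless digraphs, α, β : G → H homomorphisms, and let u → v be an arc of G. Let S_u be a reduced walk of even length from α(u) to β(u), and let S_v be the reduced walk obtained from (α(v) α(u)) · S_u · (β(u) β(v)) in π(H). Then S_u is OUT-compatible if and only if S_v is IN-compatible. -/

import Mathlib

namespace HRecoloring

/-- A digraph: a vertex type together with an arc relation. -/
structure Dgraph (V : Type) where
  Adj : V → V → Prop

variable {V X : Type}

/-- Adjacency in the underlying undirected graph. -/
def Dgraph.UAdj (G : Dgraph V) (u v : V) : Prop := G.Adj u v ∨ G.Adj v u

/-- A digraph is loopless if it has no arc `v → v`. -/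
def Dgraph.Loopless (G : Dgraph V) : Prop := ∀ v, ¬ G.Adj v v

/-- A digraph is reflexive if `v → v` for every vertex `v`. -/
def Dgraph.IsReflexive (G : Dgraph V) : Prop := ∀ v, G.Adj v v

/-- A symmetric digraph, which we identify with an undirected graph. -/
def Dgraph.IsSymmetric (G : Dgraph V) : Prop := ∀ u v, G.Adj u v → G.Adj v u

/-- The underlying undirected graph, as a symmetric digraph. -/
def Dgraph.usym (G : Dgraph V) : Dgraph V := ⟨fun u v => G.UAdj u v⟩

/-- A (di)graph homomorphism. -/
def IsHom (G : Dgraph V) (H : Dgraph X) (f : V → X) : Prop :=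
  ∀ ⦃u v⦄, G.Adj u v → H.Adj (f u) (f v)

/-- A walk from `a` to `b`, encoded by its list of successive vertices.
A walk in a digraph is a walk in its underlying undirected graph. -/
def IsWalk (G : Dgraph V) (a b : V) (l : List V) : Prop :=
  l ≠ [] ∧ l.head? = some a ∧ l.getLast? = some b ∧ l.Chain' G.UAdj

/-- Weak connectivity. -/
def Dgraph.WConn (G : Dgraph V) : Prop := ∀ u v : V, ∃ l, IsWalk G u v l

/-- Concatenation of two walks sharing an endpoint. -/
def wcomp (l₁ l₂ : List V) : List V := l₁ ++ l₂.tail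

/-- Number of edges of a walk. -/
def wlen (l : List V) : ℕ := l.length - 1

/-- One reduction step on walks: delete a backtracking pair `(x y)(y x)` or a
one-edge loop step `(x x)`. -/
def RStep (l l' : List V) : Prop :=
  (∃ (p s : List V) (x y : V), l = p ++ [x, y, x] ++ s ∧ l' = p ++ [x] ++ s) ∨
  (∃ (p s : List V) (x : V), l = p ++ [x, x] ++ s ∧ l' = p ++ [x] ++ s)

/-- Equality of walks in the fundamental groupoid `π(H)`: the equivalence
generated by reduction steps (two walks are equal in `π(H)` iff they reduce to
the same reduced walk). -/
def PiEq (l l' : List V) : Prop := Relation.EqvGen RStep l l'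

/-- A walk is reduced if no reduction step applies to it. -/
def IsReduced (l : List V) : Prop := ∀ l', ¬ RStep l l'

/-- A closed walk is cyclically reduced if it is reduced and its first and last
edges are not inverses of each other. -/
def IsCycReduced (l : List V) : Prop :=
  IsReduced l ∧ ∃ h : 2 ≤ l.length,
    l.get ⟨1, by omega⟩ ≠ l.get ⟨l.length - 2, by omega⟩

/-- `n`-fold concatenation of a closed walk `R` based at `h`. -/
def witer (R : List V) (h : V) : ℕ → List V
  | 0 => [h]
  | n + 1 => wcomp R (witer R h n)

/-- `Rⁿ` for an integer `n`, for a closed walk `R` based at `h`; for `n < 0`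
this is the `|n|`-fold concatenation of the reversed walk `R⁻¹`. -/
def zpowWalk (R : List V) (h : V) (n : ℤ) : List V :=
  if 0 ≤ n then witer R h n.toNat else witer R.reverse h (-n).toNat

/-- A walk is symmetric if every edge it traverses is a symmetric arc. -/
def IsSymWalk (H : Dgraph X) (l : List X) : Prop :=
  l.Chain' fun a b => H.Adj a b ∧ H.Adj b a

/-- The conjugated walk `α(W)⁻¹ · Q · β(W)`. -/
def conj (α β : V → X) (Wl : List V) (Q : List X) : List X :=
  wcomp (wcomp (Wl.map α).reverse Q) (Wl.map β)

/-- Topological validity of a walk `Q` from `α q` to `β q`: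
`β(C) = Q⁻¹ · α(C) · Q` in `π(H)` for every closed walk `C` at `q`. -/
def TopValid (G : Dgraph V) (H : Dgraph X) (α β : V → X) (q : V) (Q : List X) : Prop :=
  ∀ C : List V, IsWalk G q q C →
    PiEq (C.map β) (wcomp (wcomp Q.reverse (C.map α)) Q)

/-- IN-zigzag pattern `a₁ ← a₂ → a₃ ← … ← a_{n-1} → a_n`. -/
def INCompatible (H : Dgraph X) (l : List X) : Prop :=
  ∀ (i : ℕ) (h : i + 1 < l.length),
    if i % 2 = 0 then H.Adj (l.get ⟨i + 1, h⟩) (l.get ⟨i, by omega⟩)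
    else H.Adj (l.get ⟨i, by omega⟩) (l.get ⟨i + 1, h⟩)

/-- OUT-zigzag pattern `a₁ → a₂ ← a₃ → … → a_{n-1} ← a_n`. -/
def OUTCompatible (H : Dgraph X) (l : List X) : Prop :=
  ∀ (i : ℕ) (h : i + 1 < l.length),
    if i % 2 = 0 then H.Adj (l.get ⟨i, by omega⟩) (l.get ⟨i + 1, h⟩)
    else H.Adj (l.get ⟨i + 1, h⟩) (l.get ⟨i, by omega⟩)

/-- A vertex is of type IN if it has an in-neighbor. -/
def TypeIN (G : Dgraph V) (v : V) : Prop := ∃ u, G.Adj u v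

/-- A vertex is of type OUT if it has an out-neighbor. -/
def TypeOUT (G : Dgraph V) (v : V) : Prop := ∃ u, G.Adj v u

/-- A vertex is of type SYM if it is of type IN and of type OUT. -/
def TypeSYM (G : Dgraph V) (v : V) : Prop := TypeIN G v ∧ TypeOUT G v

/-- The zigzag condition for the vertex `v`. -/
def Zigzag (G : Dgraph V) (H : Dgraph X) (v : V) (l : List X) : Prop :=
  (TypeIN G v → INCompatible H l) ∧ (TypeOUT G v → OUTCompatible H l)

/-- A recoloring sequence: a nonempty sequence of homomorphisms in which
consecutive homomorphisms differ on exactly one vertex. -/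
def IsRecolSeq (G : Dgraph V) (H : Dgraph X) (σs : List (V → X)) : Prop :=
  σs ≠ [] ∧ (∀ σ ∈ σs, IsHom G H σ) ∧ σs.Chain' fun σ σ' => ∃! u, σ u ≠ σ' u

/-- The monochromatic neighborhood property: whenever a vertex changes its
color, all of its neighbors (in the underlying undirected graph) have one
common color. -/
def MonoNbhd (G : Dgraph V) (σs : List (V → X)) : Prop :=
  σs.Chain' fun σ σ' => ∀ v, σ v ≠ σ' v → ∃ h, ∀ w, G.UAdj v w → σ w = h

/-- `VWalk G v σs S`: `S` is the vertex walk `S(v)` of the recoloring sequence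
`σs`; each color change of `v` from `a` to `b`, while all neighbors of `v` are
colored `h`, contributes the two edges `(a h)(h b)`. -/
inductive VWalk (G : Dgraph V) (v : V) : List (V → X) → List X → Prop
  | single (σ : V → X) : VWalk G v [σ] [σ v]
  | stay {σ σ' : V → X} {rest : List (V → X)} {l : List X} :
      σ v = σ' v → VWalk G v (σ' :: rest) l → VWalk G v (σ :: σ' :: rest) l
  | move {σ σ' : V → X} {rest : List (V → X)} {l : List X} (h : X) :
      σ v ≠ σ' v → (∀ w, G.UAdj v w → σ w = h) →
      VWalk G v (σ' :: rest) l → VWalk G v (σ :: σ' :: rest) (σ v :: h :: l)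

/-- `H`-realizability of a walk `Q` via recoloring sequences satisfying the
monochromatic neighborhood property: `Q = S(q)` in `π(H)`. -/
def MRealizable (G : Dgraph V) (H : Dgraph X) (α β : V → X) (q : V) (Q : List X) : Prop :=
  ∃ (σs : List (V → X)) (Sq : List X),
    IsRecolSeq G H σs ∧ σs.head? = some α ∧ σs.getLast? = some β ∧
    MonoNbhd G σs ∧ VWalk G q σs Sq ∧ PiEq Sq Q

/-- Orientation compatibility of a walk `Q`: every generated vertex walk
satisfies the zigzag condition. -/
def OrientCompatible (G : Dgraph V) (H : Dgraph X) (α β : V → X) (q : V) (Q : List X) : Prop :=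
  ∀ (v : V) (Wl : List V), IsWalk G q v Wl →
    ∀ S : List X, IsReduced S → PiEq (conj α β Wl Q) S → Zigzag G H v S

/-- Hom₁-adjacency: the homomorphisms differ on exactly one vertex and, for
every arc `x → y` of `G`, both `φ x → ψ y` and `ψ x → φ y` are arcs of `H`. -/
def Hom1Adj (G : Dgraph V) (H : Dgraph X) (φ ψ : V → X) : Prop :=
  (∃! u, φ u ≠ ψ u) ∧ ∀ ⦃x y⦄, G.Adj x y → H.Adj (φ x) (ψ y) ∧ H.Adj (ψ x) (φ y)

/-- A recoloring sequence in the Hom₁ sense (digraphs). -/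
def Hom1Seq (G : Dgraph V) (H : Dgraph X) (σs : List (V → X)) : Prop :=
  σs ≠ [] ∧ (∀ σ ∈ σs, IsHom G H σ) ∧ σs.Chain' (Hom1Adj G H)

/-- A recoloring sequence in which each step recolors exactly one vertex to an
adjacent color (the Hom₁ sense for reflexive undirected graphs). -/
def AdjRecolSeq (G : Dgraph V) (H : Dgraph X) (σs : List (V → X)) : Prop :=
  σs ≠ [] ∧ (∀ σ ∈ σs, IsHom G H σ) ∧
  σs.Chain' fun σ σ' => (∃! u, σ u ≠ σ' u) ∧ ∀ u, σ u ≠ σ' u → H.Adj (σ u) (σ' u)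

/-- The push-or-pull property: whenever a vertex changes its color from `a` to
`b`, every neighbor of that vertex has color `a` or `b`. -/
def PushOrPull (G : Dgraph V) (σs : List (V → X)) : Prop :=
  σs.Chain' fun σ σ' => ∀ u, σ u ≠ σ' u → ∀ w, G.UAdj u w → σ w = σ u ∨ σ w = σ' u

/-- The walk of successive colors of `v` along a recoloring sequence. -/
def colorWalk (σs : List (V → X)) (v : V) : List X := σs.map fun σ => σ v

/-- `H`-realizability via recoloring sequences (reflexive undirected Hom₁
sense) satisfying the push-or-pull property. -/
def PRealizable (G : Dgraph V) (H : Dgraph X) (α β : V → X) (q : V) (Q : List X) : Prop :=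
  ∃ σs : List (V → X), AdjRecolSeq G H σs ∧ σs.head? = some α ∧ σs.getLast? = some β ∧
    PushOrPull G σs ∧ PiEq (colorWalk σs q) Q

/-- `H`-realizability via Hom₁ recoloring sequences of digraphs satisfying the
push-or-pull property. -/
def DRealizable (G : Dgraph V) (H : Dgraph X) (α β : V → X) (q : V) (Q : List X) : Prop :=
  ∃ σs : List (V → X), Hom1Seq G H σs ∧ σs.head? = some α ∧ σs.getLast? = some β ∧
    PushOrPull G σs ∧ PiEq (colorWalk σs q) Q

/-- `H` contains no 4-cycle of algebraic girth 0 as a subgraph (neither of the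
two orientations of the 4-cycle with two forward and two backward arcs). -/
def NoZeroGirthC4 (H : Dgraph X) : Prop :=
  ∀ a b c d : X, a ≠ b → a ≠ c → a ≠ d → b ≠ c → b ≠ d → c ≠ d →
    ¬(H.Adj a b ∧ H.Adj b d ∧ H.Adj a c ∧ H.Adj c d) ∧
    ¬(H.Adj a b ∧ H.Adj d b ∧ H.Adj a c ∧ H.Adj d c)

/-- `H` contains no triangle of algebraic girth 1 as a subgraph. -/
def NoOneGirthTriangle (H : Dgraph X) : Prop :=
  ∀ x y z : X, x ≠ y → y ≠ z → x ≠ z → ¬(H.Adj x y ∧ H.Adj y z ∧ H.Adj x z)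

/-- A path in the reconfiguration graph `R_H(G)` from `α` to `β`. -/
def IsRPath (G : Dgraph V) (H : Dgraph X) (α β : V → X) (L : List (V → X)) : Prop :=
  L ≠ [] ∧ L.head? = some α ∧ L.getLast? = some β ∧
  (∀ σ ∈ L, IsHom G H σ) ∧ L.Chain' fun φ ψ => ∃! u, φ u ≠ ψ u

/-- A path in the graph `Hom₁(G, H)` from `α` to `β`. -/
def IsHom1Path (G : Dgraph V) (H : Dgraph X) (α β : V → X) (L : List (V → X)) : Prop :=
  L ≠ [] ∧ L.head? = some α ∧ L.getLast? = some β ∧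
  (∀ σ ∈ L, IsHom G H σ) ∧ L.Chain' (Hom1Adj G H)

/-- The set of reduced walks `Q` from `α q` to `β q` that generate symmetric
vertex walks on `V'` with the system of walks `Wf`. -/
def SymGenSet (H : Dgraph X) (α β : V → X) (q : V)
    (V' : Set V) (Wf : V → List V) : Set (List X) :=
  {Q | IsWalk H (α q) (β q) Q ∧ IsReduced Q ∧
    ∀ v ∈ V', ∀ S : List X, IsReduced S → PiEq (conj α β (Wf v) Q) S → IsSymWalk H S}

/-- The set of orientation-compatible walks for `q` and the system `Uf`. -/
def OCSet (G : Dgraph V) (H : Dgraph X) (α β : V → X) (q : V)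
    (Uf : V → List V) : Set (List X) :=
  {Q | IsWalk H (α q) (β q) Q ∧ IsReduced Q ∧ Even (wlen Q) ∧
    ∀ (v : V) (S : List X), IsReduced S → PiEq (conj α β (Uf v) Q) S → Zigzag G H v S}

/-- The set `Π_q` of walks from `α q` to `β q` that are `H`-realizable via
recoloring sequences satisfying the monochromatic neighborhood property. -/
def MRealSet (G : Dgraph V) (H : Dgraph X) (α β : V → X) (q : V) : Set (List X) :=
  {Q | IsWalk H (α q) (β q) Q ∧ IsReduced Q ∧ MRealizable G H α β q Q}

/-- The set of walks from `α q` to `β q` that are `H`-realizable via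
recoloring sequences satisfying the push-or-pull property. -/
def PRealSet (G : Dgraph V) (H : Dgraph X) (α β : V → X) (q : V) : Set (List X) :=
  {Q | IsWalk H (α q) (β q) Q ∧ IsReduced Q ∧ PRealizable G H α β q Q}

/-- Ceiling division on natural numbers. -/
def cdiv (a b : ℕ) : ℕ := (a + b - 1) / b

end HRecoloring

open HRecoloring

section Aux
variable {X : Type}

/-! ### Encoding walks as free-group words -/

/-- Encode a walk as a word over edge-generators. -/
def toL : List X → List ((X × X) × Bool)
  | [] => []
  | [_] => []
  | a :: b :: t => ((a,b),true) :: ((b,a),false) :: toL (b :: t)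

lemma toL_append : ∀ (p : List X) (x : X) (s : List X),
    toL (p ++ x :: s) = toL (p ++ [x]) ++ toL (x :: s)
  | [], x, s => by simp [toL]
  | [a], x, s => by simp [toL]
  | a :: b :: p, x, s => by
    have := toL_append (b :: p) x s
    simp only [List.cons_append, toL] at *
    simp [this]

lemma mk_rstep {l l' : List X} (h : RStep l l') :
    FreeGroup.mk (toL l) = FreeGroup.mk (toL l') := by
  rcases h with ⟨p, s, x, y, hl, hl'⟩ | ⟨p, s, x, hl, hl'⟩
  · subst hl hl'
    have h1 : toL (p ++ [x, y, x] ++ s) =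
        toL (p ++ [x]) ++ ([((x,y),true), ((y,x),false), ((y,x),true), ((x,y),false)] ++ toL (x :: s)) := by
      have e1 : p ++ [x, y, x] ++ s = p ++ x :: (y :: x :: s) := by simp
      rw [e1, toL_append p x (y :: x :: s)]
      simp [toL]
    have h2 : toL (p ++ [x] ++ s) = toL (p ++ [x]) ++ ([] ++ toL (x :: s)) := by
      have e2 : p ++ [x] ++ s = p ++ x :: s := by simp
      rw [e2, toL_append p x s]; simp
    rw [h1, h2]
    apply FreeGroup.Red.exact.2
    refine ⟨toL (p ++ [x]) ++ ([] ++ toL (x :: s)), ?_, Relation.ReflGen.refl.to_reflTransGen⟩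
    have s1 : FreeGroup.Red.Step
        (toL (p ++ [x]) ++ ([((x,y),true), ((y,x),false), ((y,x),true), ((x,y),false)] ++ toL (x :: s)))
        (toL (p ++ [x]) ++ ([((x,y),true), ((x,y),false)] ++ toL (x :: s))) := by
      have : FreeGroup.Red.Step
          ((toL (p ++ [x]) ++ [((x,y),true)]) ++ ((y,x),false) :: ((y,x),!false) :: (((x,y),false) :: toL (x :: s)))
          ((toL (p ++ [x]) ++ [((x,y),true)]) ++ (((x,y),false) :: toL (x :: s))) := FreeGroup.Red.Step.not
      simpa using this
    have s2 : FreeGroup.Red.Step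
        (toL (p ++ [x]) ++ ([((x,y),true), ((x,y),false)] ++ toL (x :: s)))
        (toL (p ++ [x]) ++ ([] ++ toL (x :: s))) := by
      have : FreeGroup.Red.Step
          (toL (p ++ [x]) ++ ((x,y),true) :: ((x,y),!true) :: toL (x :: s))
          (toL (p ++ [x]) ++ toL (x :: s)) := FreeGroup.Red.Step.not
      simpa using this
    exact (Relation.ReflTransGen.single s1).trans (Relation.ReflTransGen.single s2)
  · subst hl hl'
    have h1 : toL (p ++ [x, x] ++ s) =
        toL (p ++ [x]) ++ ([((x,x),true), ((x,x),false)] ++ toL (x :: s)) := by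
      have e1 : p ++ [x, x] ++ s = p ++ x :: (x :: s) := by simp
      rw [e1, toL_append p x (x :: s)]
      simp [toL]
    have h2 : toL (p ++ [x] ++ s) = toL (p ++ [x]) ++ toL (x :: s) := by
      have e2 : p ++ [x] ++ s = p ++ x :: s := by simp
      rw [e2, toL_append p x s]
    rw [h1, h2]
    apply FreeGroup.Red.exact.2
    refine ⟨toL (p ++ [x]) ++ toL (x :: s), Relation.ReflTransGen.single ?_, Relation.ReflTransGen.refl⟩
    have : FreeGroup.Red.Step
        (toL (p ++ [x]) ++ ((x,x),true) :: ((x,x),!true) :: toL (x :: s))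
        (toL (p ++ [x]) ++ toL (x :: s)) := FreeGroup.Red.Step.not
    simpa using this

lemma mk_piEq {l l' : List X} (h : PiEq l l') :
    FreeGroup.mk (toL l) = FreeGroup.mk (toL l') := by
  induction h with
  | rel _ _ h => exact mk_rstep h
  | refl => rfl
  | symm _ _ _ ih => exact ih.symm
  | trans _ _ _ _ _ ih1 ih2 => exact ih1.trans ih2

lemma isReduced_tail {a : X} {l : List X} (h : IsReduced (a :: l)) : IsReduced l := by
  intro l' hl'
  rcases hl' with ⟨p, s, x, y, h1, h2⟩ | ⟨p, s, x, h1, h2⟩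
  · exact h (a :: l') (Or.inl ⟨a :: p, s, x, y, by simp [h1], by simp [h2]⟩)
  · exact h (a :: l') (Or.inr ⟨a :: p, s, x, by simp [h1], by simp [h2]⟩)

lemma step_iff {α : Type*} {L w : List (α × Bool)} :
    FreeGroup.Red.Step L w ↔
      ∃ L₁ L₂ x b, L = L₁ ++ (x,b) :: (x,!b) :: L₂ ∧ w = L₁ ++ L₂ := by
  constructor
  · intro h
    cases h with
    | @not L₁ L₂ x b => exact ⟨L₁, L₂, x, b, rfl, rfl⟩
  · rintro ⟨L₁, L₂, x, b, rfl, rfl⟩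
    exact FreeGroup.Red.Step.not

lemma no_step_toL : ∀ (l : List X), IsReduced l →
    ∀ w, ¬ FreeGroup.Red.Step (toL l) w := by
  intro l
  induction l with
  | nil =>
    intro _ w h
    rw [step_iff] at h
    obtain ⟨L₁, L₂, z, c, h1, -⟩ := h
    simp [toL] at h1
  | cons a t IH =>
    intro hred w h
    rw [step_iff] at h
    obtain ⟨L₁, L₂, z, c, h1, -⟩ := h
    match t with
    | [] => simp [toL] at h1
    | b :: t' =>
      rw [show toL (a :: b :: t') = ((a,b),true) :: ((b,a),false) :: toL (b :: t') from rfl] at h1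
      match L₁ with
      | [] =>
        simp only [List.nil_append, List.cons.injEq] at h1
        obtain ⟨h2, h3, -⟩ := h1
        obtain ⟨rfl, rfl⟩ := Prod.mk.injEq .. ▸ h2
        have hba : (b, a) = (a, b) := (Prod.mk.injEq .. ▸ h3).1
        have : a = b := (Prod.mk.injEq .. ▸ hba).2
        subst this
        exact hred (a :: t') (Or.inr ⟨[], t', a, by simp, by simp⟩)
      | [e] =>
        simp only [List.cons_append, List.nil_append, List.cons.injEq] at h1
        obtain ⟨-, h3, h4⟩ := h1
        obtain ⟨rfl, rfl⟩ : (b, a) = z ∧ false = c := Prod.mk.injEq .. ▸ h3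
        match t' with
        | [] => simp [toL] at h4
        | c' :: t'' =>
          rw [show toL (b :: c' :: t'') = ((b,c'),true) :: ((c',b),false) :: toL (c' :: t'') from rfl]
            at h4
          simp only [List.cons.injEq] at h4
          have : (b, c') = (b, a) := (Prod.mk.injEq .. ▸ h4.1).1
          have hca : c' = a := (Prod.mk.injEq .. ▸ this).2
          refine hred (a :: t'') (Or.inl ⟨[], t'', a, b, ?_, by simp⟩)
          simp [hca]
      | e1 :: e2 :: L₁' =>
        simp only [List.cons_append, List.cons.injEq] at h1
        exact IH (isReduced_tail hred) (L₁' ++ L₂)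
          (step_iff.2 ⟨L₁', L₂, z, c, h1.2.2, rfl⟩)

lemma reduce_toL [DecidableEq (X × X)] {l : List X} (h : IsReduced l) :
    FreeGroup.reduce (toL l) = toL l := by
  rcases Relation.ReflTransGen.cases_head (FreeGroup.reduce.red (L := toL l)) with heq | ⟨w, hw, -⟩
  · exact heq.symm
  · exact absurd hw (no_step_toL l h w)

lemma toL_inj : ∀ (l l' : List X), l.head? = l'.head? → toL l = toL l' → l = l' := by
  intro l
  induction l with
  | nil =>
    intro l' hh _
    cases l' with
    | nil => rfl
    | cons a t => simp at hh
  | cons a t IH =>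
    intro l' hh ht
    cases l' with
    | nil => simp at hh
    | cons a' t' =>
      simp only [List.head?_cons, Option.some.injEq] at hh
      subst hh
      match t, t' with
      | [], [] => rfl
      | [], b' :: t'' => simp [toL] at ht
      | b :: t'', [] => simp [toL] at ht
      | b :: t2, b' :: t2' =>
        rw [show toL (a :: b :: t2) = ((a,b),true) :: ((b,a),false) :: toL (b :: t2) from rfl,
          show toL (a :: b' :: t2') = ((a,b'),true) :: ((b',a),false) :: toL (b' :: t2') from rfl]
          at ht
        simp only [List.cons.injEq] at ht
        obtain ⟨h1, -, h3⟩ := ht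
        have hb : b = b' := (Prod.mk.injEq .. ▸ (Prod.mk.injEq .. ▸ h1).1).2
        subst hb
        have := IH (l' := b :: t2') (by simp) h3
        simp only [List.cons.injEq] at this
        simp [this.2]

lemma rstep_head {l l' : List X} (h : RStep l l') : l.head? = l'.head? := by
  rcases h with ⟨p, s, x, y, rfl, rfl⟩ | ⟨p, s, x, rfl, rfl⟩ <;> cases p <;> simp

lemma piEq_head {l l' : List X} (h : PiEq l l') : l.head? = l'.head? := by
  induction h with
  | rel _ _ h => exact rstep_head h
  | refl => rfl
  | symm _ _ _ ih => exact ih.symm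
  | trans _ _ _ _ _ ih1 ih2 => exact ih1.trans ih2

/-- Reduced representatives of a `π(H)`-class are unique. -/
lemma piEq_reduced_unique {l l' : List X} (h : PiEq l l')
    (hl : IsReduced l) (hl' : IsReduced l') : l = l' := by
  classical
  have hmk := mk_piEq h
  have hred := FreeGroup.reduce.sound hmk
  rw [reduce_toL hl, reduce_toL hl'] at hred
  exact toL_inj _ _ (piEq_head h) hred

end Aux

section Aux2
variable {X : Type}

lemma rstep_append_right {l l' : List X} (z : List X) (h : RStep l l') :
    RStep (l ++ z) (l' ++ z) := by
  rcases h with ⟨p, s, x, y, rfl, rfl⟩ | ⟨p, s, x, rfl, rfl⟩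
  · exact Or.inl ⟨p, s ++ z, x, y, by simp, by simp⟩
  · exact Or.inr ⟨p, s ++ z, x, by simp, by simp⟩

lemma piEq_append_right {l l' : List X} (z : List X) (h : PiEq l l') :
    PiEq (l ++ z) (l' ++ z) := by
  induction h with
  | rel _ _ h => exact Relation.EqvGen.rel _ _ (rstep_append_right z h)
  | refl => exact Relation.EqvGen.refl _
  | symm _ _ _ ih => exact Relation.EqvGen.symm _ _ ih
  | trans _ _ _ _ _ ih1 ih2 => exact Relation.EqvGen.trans _ _ _ ih1 ih2

lemma rstep_reverse {l l' : List X} (h : RStep l l') : RStep l.reverse l'.reverse := by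
  rcases h with ⟨p, s, x, y, rfl, rfl⟩ | ⟨p, s, x, rfl, rfl⟩
  · exact Or.inl ⟨s.reverse, p.reverse, x, y, by simp, by simp⟩
  · exact Or.inr ⟨s.reverse, p.reverse, x, by simp, by simp⟩

lemma isReduced_reverse {l : List X} (h : IsReduced l) : IsReduced l.reverse := by
  intro w hw
  have := rstep_reverse hw
  rw [List.reverse_reverse] at this
  exact h _ this

lemma isReduced_cons {a : X} {l : List X} (hl : IsReduced l)
    (h0 : ∀ x, l.head? = some x → a ≠ x)
    (h1 : ∀ x, l[1]? = some x → a ≠ x) : IsReduced (a :: l) := by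
  intro w hw
  rcases hw with ⟨p, s, x, y, hp, -⟩ | ⟨p, s, x, hp, -⟩
  · match p with
    | [] =>
      simp only [List.nil_append, List.cons_append, List.cons.injEq] at hp
      obtain ⟨rfl, hp⟩ := hp
      have : l[1]? = some a := by rw [hp]; simp
      exact h1 a this rfl
    | b :: p' =>
      simp only [List.cons_append, List.cons.injEq] at hp
      exact hl (p' ++ [x] ++ s) (Or.inl ⟨p', s, x, y, hp.2, rfl⟩)
  · match p with
    | [] =>
      simp only [List.nil_append, List.cons_append, List.cons.injEq] at hp
      obtain ⟨rfl, hp⟩ := hp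
      have : l.head? = some a := by rw [hp]; simp
      exact h0 a this rfl
    | b :: p' =>
      simp only [List.cons_append, List.cons.injEq] at hp
      exact hl (p' ++ [x] ++ s) (Or.inr ⟨p', s, x, hp.2, rfl⟩)

lemma isReduced_concat {z : X} {l : List X} (hl : IsReduced l)
    (h0 : ∀ x, l.getLast? = some x → z ≠ x)
    (h1 : ∀ x, l[l.length - 2]? = some x → z ≠ x) : IsReduced (l ++ [z]) := by
  have : IsReduced (z :: l.reverse) := by
    refine isReduced_cons (isReduced_reverse hl) ?_ ?_
    · intro x hx
      exact h0 x (by rwa [List.head?_reverse] at hx)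
    · intro x hx
      have hlen : 1 < l.length := by
        by_contra hc
        push_neg at hc
        have hn : l.reverse[1]? = none := List.getElem?_eq_none (by simp; omega)
        rw [hn] at hx; cases hx
      rw [List.getElem?_reverse (by omega)] at hx
      exact h1 x (by rwa [show l.length - 1 - 1 = l.length - 2 by omega] at hx)
  have h2 := isReduced_reverse this
  rwa [List.reverse_cons, List.reverse_reverse] at h2

lemma isReduced_nil : IsReduced ([] : List X) := by
  intro w hw
  rcases hw with ⟨p, s, x, y, hp, -⟩ | ⟨p, s, x, hp, -⟩ <;> simp at hp

lemma isReduced_dropLast {l : List X} (hl : IsReduced l) : IsReduced l.dropLast := by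
  cases hr : l.reverse with
  | nil =>
    have : l = [] := by simpa using congrArg List.reverse hr
    subst this
    exact isReduced_nil
  | cons a t =>
    have hl' : l = t.reverse ++ [a] := by
      have := congrArg List.reverse hr
      simpa using this
    have h1 : IsReduced (a :: t) := hr ▸ isReduced_reverse hl
    have h2 : IsReduced t.reverse := isReduced_reverse (isReduced_tail h1)
    rw [hl', List.dropLast_concat]
    exact h2

end Aux2

section Aux3
variable {X : Type}

lemma IN_cons_iff (H : Dgraph X) (z : X) (l : List X) (h0 : 0 < l.length)
    (ha : H.Adj (l[0]'h0) z) : INCompatible H (z :: l) ↔ OUTCompatible H l := by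
  constructor
  · intro hIN i hi
    have h2 : (i + 1) + 1 < (z :: l).length := by simp; omega
    have key := hIN (i + 1) h2
    simp only [INCompatible, OUTCompatible, List.get_eq_getElem, List.getElem_cons_succ] at key ⊢
    rcases Nat.mod_two_eq_zero_or_one i with hp | hp
    · rw [if_neg (by omega)] at key
      rw [if_pos hp]
      exact key
    · rw [if_pos (by omega)] at key
      rw [if_neg (by omega)]
      exact key
  · intro hOUT i hi
    match i with
    | 0 =>
      simp only [List.get_eq_getElem, List.getElem_cons_succ, List.getElem_cons_zero]
      simpa using ha
    | j + 1 =>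
      have hj : j + 1 < l.length := by simp at hi; omega
      have key := hOUT j hj
      simp only [OUTCompatible, List.get_eq_getElem] at key
      simp only [List.get_eq_getElem, List.getElem_cons_succ]
      rcases Nat.mod_two_eq_zero_or_one j with hp | hp
      · rw [if_pos hp] at key
        rw [if_neg (by omega)]
        exact key
      · rw [if_neg (by omega)] at key
        rw [if_pos (by omega)]
        exact key

lemma IN_tail_iff (H : Dgraph X) (a z : X) (t : List X) (ha : H.Adj a z) :
    INCompatible H (z :: t) ↔ OUTCompatible H (a :: z :: t) := by
  constructor
  · intro hIN i hi
    match i with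
    | 0 =>
      simp only [List.get_eq_getElem, List.getElem_cons_succ, List.getElem_cons_zero]
      simpa using ha
    | j + 1 =>
      have hj : j + 1 < (z :: t).length := by simp at hi ⊢; omega
      have key := hIN j hj
      simp only [INCompatible, List.get_eq_getElem] at key
      simp only [List.get_eq_getElem, List.getElem_cons_succ]
      rcases Nat.mod_two_eq_zero_or_one j with hp | hp
      · rw [if_pos hp] at key
        rw [if_neg (by omega)]
        exact key
      · rw [if_neg (by omega)] at key
        rw [if_pos (by omega)]
        exact key
  · intro hOUT i hi
    have h2 : (i + 1) + 1 < (a :: z :: t).length := by simp at hi ⊢; omega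
    have key := hOUT (i + 1) h2
    simp only [OUTCompatible, List.get_eq_getElem, List.getElem_cons_succ] at key
    simp only [List.get_eq_getElem]
    rcases Nat.mod_two_eq_zero_or_one i with hp | hp
    · rw [if_neg (by omega)] at key
      rw [if_pos hp]
      exact key
    · rw [if_pos (by omega)] at key
      rw [if_neg (by omega)]
      exact key

lemma IN_concat_iff (H : Dgraph X) (z : X) (l : List X) (heven : Even l.length)
    (h0 : 0 < l.length)
    (hb : H.Adj (l[l.length - 1]'(by omega)) z) :
    INCompatible H (l ++ [z]) ↔ INCompatible H l := by
  have hlen2 : 2 ≤ l.length := by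
    rcases heven with ⟨k, hk⟩; omega
  constructor
  · intro hIN i hi
    have h2 : i + 1 < (l ++ [z]).length := by simp; omega
    have key := hIN i h2
    simp only [INCompatible, List.get_eq_getElem] at key ⊢
    rw [List.getElem_append_left (by omega), List.getElem_append_left (by omega)] at key
    exact key
  · intro hIN i hi
    simp only [List.length_append, List.length_singleton] at hi
    rcases Nat.lt_or_ge (i + 1) l.length with hlt | hge
    · have key := hIN i hlt
      simp only [INCompatible, List.get_eq_getElem] at key ⊢
      rw [List.getElem_append_left (by omega), List.getElem_append_left (by omega)]
      exact key
    · have hieq : i = l.length - 1 := by omega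
      subst hieq
      have hodd : (l.length - 1) % 2 = 1 := by
        rcases heven with ⟨k, hk⟩; omega
      simp only [List.get_eq_getElem]
      rw [if_neg (by omega)]
      have e1 : (l ++ [z])[l.length - 1]'(by simp) = l[l.length - 1]'(by omega) :=
        List.getElem_append_left (by omega)
      have e2 : (l ++ [z])[l.length - 1 + 1]'(by simp; omega) = z := by
        have h3 : l.length - 1 + 1 = l.length := by omega
        simp [h3]
      rw [e1, e2]
      exact hb

lemma IN_dropLast_iff (H : Dgraph X) (l : List X) (heven : Even l.length)
    (h2 : 2 ≤ l.length)
    (hb : H.Adj (l[l.length - 1]'(by omega)) (l[l.length - 2]'(by omega))) :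
    INCompatible H l ↔ INCompatible H l.dropLast := by
  constructor
  · intro hIN i hi
    rw [List.length_dropLast] at hi
    have key := hIN i (by omega)
    simp only [INCompatible, List.get_eq_getElem] at key ⊢
    rw [List.getElem_dropLast, List.getElem_dropLast]
    exact key
  · intro hIN i hi
    rcases Nat.lt_or_ge (i + 1) (l.length - 1) with hlt | hge
    · have key := hIN i (by rw [List.length_dropLast]; omega)
      simp only [INCompatible, List.get_eq_getElem, List.getElem_dropLast] at key
      simp only [List.get_eq_getElem]
      exact key
    · have hieq : i = l.length - 2 := by omega
      subst hieq
      have heq : (l.length - 2) % 2 = 0 := by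
        rcases heven with ⟨k, hk⟩; omega
      simp only [List.get_eq_getElem]
      rw [if_pos heq]
      have e2 : l[l.length - 2 + 1]'(by omega) = l[l.length - 1]'(by omega) := by
        congr 1
        omega
      rw [e2]
      exact hb

end Aux3

section Aux4
variable {X : Type}

lemma getElem_of_getElem?' {l : List X} {i : ℕ} {c : X} (h : l[i]? = some c)
    (hi : i < l.length) : l[i]'hi = c := by
  rw [List.getElem?_eq_getElem hi] at h
  exact Option.some_injective _ h

lemma stage1 (H : Dgraph X) (hHll : H.Loopless) {a z : X} {l : List X}
    (hl : IsReduced l) (hne : l ≠ []) (hhead : l.head? = some a) (hadj : H.Adj a z) :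
    ∃ T, PiEq (z :: l) T ∧ IsReduced T ∧ T ≠ [] ∧
      T.getLast? = l.getLast? ∧ T.length % 2 = (l.length + 1) % 2 ∧
      (OUTCompatible H l ↔ INCompatible H T) := by
  classical
  have hza : z ≠ a := by
    intro h
    subst h
    exact hHll z hadj
  obtain ⟨t, rfl⟩ : ∃ t, l = a :: t := by
    cases l with
    | nil => simp at hhead
    | cons x t =>
      simp only [List.head?_cons, Option.some.injEq] at hhead
      exact ⟨t, by rw [hhead]⟩
  by_cases hc : t.head? = some z
  · obtain ⟨t', rfl⟩ : ∃ t', t = z :: t' := by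
      cases t with
      | nil => simp at hc
      | cons x t' =>
        simp only [List.head?_cons, Option.some.injEq] at hc
        exact ⟨t', by rw [hc]⟩
    refine ⟨z :: t', ?_, isReduced_tail hl, by simp, ?_, ?_, ?_⟩
    · exact Relation.EqvGen.rel _ _ (Or.inl ⟨[], t', z, a, by simp, by simp⟩)
    · simp [List.getLast?_cons_cons]
    · simp only [List.length_cons]; omega
    · exact (IN_tail_iff H a z t' hadj).symm
  · refine ⟨z :: a :: t, Relation.EqvGen.refl _, ?_, by simp, ?_, ?_, ?_⟩
    · refine isReduced_cons hl ?_ ?_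
      · intro x hx
        simp only [List.head?_cons, Option.some.injEq] at hx
        subst hx
        exact hza
      · intro x hx hzx
        apply hc
        rw [hzx]
        cases t with
        | nil => simp at hx
        | cons y t'' => simpa using hx
    · simp [List.getLast?_cons_cons]
    · simp only [List.length_cons]
    · have ha' : H.Adj ((a :: t)[0]'(by simp)) z := by simpa using hadj
      exact (IN_cons_iff H z (a :: t) (by simp) ha').symm

lemma stage2 (H : Dgraph X) (hHll : H.Loopless) {b z : X} {T : List X}
    (hT : IsReduced T) (hne : T ≠ []) (hlast : T.getLast? = some b)
    (hadj : H.Adj b z) (heven : Even T.length) :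
    ∃ S, PiEq (T ++ [z]) S ∧ IsReduced S ∧ (INCompatible H T ↔ INCompatible H S) := by
  classical
  have hpos : 0 < T.length := List.length_pos_iff.2 hne
  have h2 : 2 ≤ T.length := by
    rcases heven with ⟨k, hk⟩; omega
  have hlast? : T[T.length - 1]? = some b := by
    rw [← List.getLast?_eq_getElem?]
    exact hlast
  have hbget : T[T.length - 1]'(by omega) = b := getElem_of_getElem?' hlast? (by omega)
  obtain ⟨A, y, hdec⟩ : ∃ A y, T = A ++ [y, b] := by
    cases hr : T.reverse with
    | nil =>
      exact absurd (by simpa using congrArg List.reverse hr) hne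
    | cons x r =>
      cases r with
      | nil =>
        have hT1 : T = [x] := by simpa using congrArg List.reverse hr
        rw [hT1] at h2
        simp at h2
      | cons y' D =>
        have hT2 : T = D.reverse ++ [y', x] := by
          have := congrArg List.reverse hr
          simpa using this
        have hx : x = b := by
          have : T.getLast? = some x := by
            rw [hT2, show D.reverse ++ [y', x] = (D.reverse ++ [y']) ++ [x] by simp,
              List.getLast?_concat]
          rw [this] at hlast
          exact Option.some_injective _ hlast
        exact ⟨D.reverse, y', by rw [hT2, hx]⟩
  have hlenT : T.length = A.length + 2 := by rw [hdec]; simp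
  have hy? : T[T.length - 2]? = some y := by
    have hidx : T.length - 2 = A.length := by omega
    rw [hidx, hdec, List.getElem?_append_right (le_refl _)]
    simp
  have hyget : T[T.length - 2]'(by omega) = y := getElem_of_getElem?' hy? (by omega)
  by_cases hzy : y = z
  · subst hzy
    refine ⟨T.dropLast, ?_, isReduced_dropLast hT, ?_⟩
    · refine Relation.EqvGen.rel _ _ (Or.inl ⟨A, [], y, b, ?_, ?_⟩)
      · rw [hdec]; simp
      · rw [hdec]
        simp [List.dropLast_append_cons]
    · refine IN_dropLast_iff H T heven h2 ?_
      rw [hbget, hyget]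
      exact hadj
  · refine ⟨T ++ [z], Relation.EqvGen.refl _, ?_,
      (IN_concat_iff H z T heven hpos (hbget ▸ hadj)).symm⟩
    refine isReduced_concat hT ?_ ?_
    · intro x hx hzx
      rw [hlast] at hx
      have hxb : x = b := (Option.some_injective _ hx).symm
      subst hxb hzx
      exact hHll z hadj
    · intro x hx hzx
      rw [hy?] at hx
      have hyx : y = x := Option.some_injective _ hx
      exact hzy (hyx.trans hzx.symm)

end Aux4

/-- For an arc `u → v` of `G`, a reduced even-length walk `S_u` from `α u` to
`β u` is OUT-compatible iff the reduced walk `S_v` obtained from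
`(α v, α u) · S_u · (β u, β v)` is IN-compatible. -/
theorem statement7 {V X : Type}
    (G : Dgraph V) (H : Dgraph X)
    (hGll : G.Loopless) (hHll : H.Loopless)
    (α β : V → X) (hα : IsHom G H α) (hβ : IsHom G H β)
    (u v : V) (huv : G.Adj u v)
    (Su : List X) (hSu : IsWalk H (α u) (β u) Su)
    (hSured : IsReduced Su) (hSueven : Even (wlen Su))
    (Sv : List X) (hSvred : IsReduced Sv)
    (hSv : PiEq (wcomp (wcomp [α v, α u] Su) [β u, β v]) Sv) :
    OUTCompatible H Su ↔ INCompatible H Sv := by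
  classical
  obtain ⟨hSne, hShead, hSlast, -⟩ := hSu
  have hadj1 : H.Adj (α u) (α v) := hα huv
  have hadj2 : H.Adj (β u) (β v) := hβ huv
  obtain ⟨T, hP1, hTred, hTne, hTlast, hTlen, hiff1⟩ :=
    stage1 H hHll hSured hSne hShead hadj1
  have hTlastb : T.getLast? = some (β u) := hTlast.trans hSlast
  have hTeven : Even T.length := by
    have hlpos : 0 < Su.length := List.length_pos_iff.2 hSne
    obtain ⟨k, hk⟩ := hSueven
    unfold wlen at hk
    rw [Nat.even_iff]
    omega
  obtain ⟨S, hP2, hSred', hiff2⟩ := stage2 H hHll hTred hTne hTlastb hadj2 hTeven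
  have hWeq : wcomp (wcomp [α v, α u] Su) [β u, β v] = (α v :: Su) ++ [β v] := by
    obtain ⟨t, rfl⟩ : ∃ t, Su = α u :: t := by
      cases Su with
      | nil => simp at hShead
      | cons x t =>
        simp only [List.head?_cons, Option.some.injEq] at hShead
        exact ⟨t, by rw [hShead]⟩
    simp [wcomp]
  rw [hWeq] at hSv
  have hP : PiEq ((α v :: Su) ++ [β v]) S :=
    Relation.EqvGen.trans _ _ _ (piEq_append_right [β v] hP1) hP2
  have hSvS : Sv = S :=
    piEq_reduced_unique
      (Relation.EqvGen.trans _ _ _ (Relation.EqvGen.symm _ _ hSv) hP) hSvred hSred'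
  rw [hSvS]
  exact hiff1.trans hiff2
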